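/- Let K = ℚ(q) be the field of rational functions in one variable q over ℚ, and in the Laurent polynomial ring K[t, t^{−1}] set α_r := (1 − q^r)(1 − t^{−r})(1 − q^{−r}t^r)/r for r ≥ 1. Then for every n ≥ 1 the element α_n − [n]²·α_1, where [n]² := (qⁿ − 2 + q^{−n})/(q − 2 + q^{−1}) ∈ K, is divisible by (t − q)² in K[t, t^{−1}]. -/

import Mathlib

noncomputable section

/-- The field `K = ℚ(q)`. -/
abbrev KK : Type := RatFunc ℚ

/-- The element `q ∈ K`. -/
def qq : KK := RatFunc.X

open LaurentPolynomial

/-- `α_r = (1 − q^r)(1 − t^{−r})(1 − q^{−r}t^r)/r ∈ K[t,t⁻¹]`. -/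
def alphaE (r : ℕ) : LaurentPolynomial KK :=
  C ((r : KK)⁻¹) *
    ((1 - C (qq ^ r)) * (1 - T (-(r : ℤ))) * (1 - C (qq ^ (-(r : ℤ))) * T (r : ℤ)))

/-- `[n]² = (qⁿ − 2 + q^{−n})/(q − 2 + q^{−1}) ∈ K`. -/
def qint_sq (n : ℕ) : KK :=
  (qq ^ n - 2 + qq ^ (-(n : ℤ))) / (qq - 2 + qq⁻¹)

lemma sq_dvd_aux {K : Type*} [Field K] (p : Polynomial K) (a : K)
    (h1 : p.eval a = 0) (h2 : p.derivative.eval a = 0) :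
    (Polynomial.X - Polynomial.C a)^2 ∣ p := by
  obtain ⟨Q, hQ⟩ := (Polynomial.dvd_iff_isRoot (p := p) (a := a)).2 h1
  have hQa : Q.eval a = 0 := by
    have h3 := congrArg (Polynomial.eval a) (congrArg Polynomial.derivative hQ)
    rw [Polynomial.derivative_mul] at h3
    simp [h2] at h3
    simpa using h3.symm
  obtain ⟨R, hR⟩ := (Polynomial.dvd_iff_isRoot (p := Q) (a := a)).2 hQa
  exact ⟨R, by rw [hQ, hR]; ring⟩

lemma qq_ne_zero : qq ≠ 0 := RatFunc.X_ne_zero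

lemma qq_ne_one : qq ≠ 1 := by
  intro h
  have h2 : (Polynomial.X : Polynomial ℚ) = 1 := by
    apply RatFunc.algebraMap_injective ℚ
    simpa [RatFunc.algebraMap_X, qq] using h
  simpa using congrArg (fun p => Polynomial.coeff p 0) h2

lemma denom_ne_zero : qq - 2 + qq⁻¹ ≠ 0 := by
  have hq := qq_ne_zero
  have h1 : qq - 2 + qq⁻¹ = (qq - 1)^2 * qq⁻¹ := by
    field_simp
    ring
  rw [h1]
  exact mul_ne_zero (pow_ne_zero _ (sub_ne_zero.mpr qq_ne_one)) (inv_ne_zero hq)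

lemma key (r : ℕ) : alphaE r * T (r : ℤ) =
    C ((r : KK)⁻¹) *
      ((1 - C (qq ^ r)) * (T (r : ℤ) - 1) * (1 - C (qq ^ (-(r : ℤ))) * T (r : ℤ))) := by
  have h : (1 - (T (-(r : ℤ)) : LaurentPolynomial KK)) * T (r : ℤ) = T (r : ℤ) - 1 := by
    rw [sub_mul, one_mul, ← T_add]
    simp
  unfold alphaE
  linear_combination (C ((r : KK))⁻¹ * (1 - C (qq ^ r)) *
    (1 - C (qq ^ (-(r : ℤ))) * T (r : ℤ))) * h

theorem stmt_8 (n : ℕ) (hn : 1 ≤ n) :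
    (T 1 - C qq) ^ 2 ∣ (alphaE n - C (qint_sq n) * alphaE 1) := by
  obtain ⟨m, rfl⟩ : ∃ m, n = m + 1 := ⟨n - 1, (Nat.succ_pred_eq_of_pos hn).symm⟩
  rw [← (isUnit_T ((m + 1 : ℕ) : ℤ)).dvd_mul_right]
  set s : KK := qint_sq (m + 1) with hs
  set P : Polynomial KK :=
    Polynomial.C (((m + 1 : ℕ) : KK)⁻¹) *
      ((1 - Polynomial.C (qq ^ (m + 1))) * (Polynomial.X ^ (m + 1) - 1) *
        (1 - Polynomial.C (qq ^ (-((m + 1 : ℕ) : ℤ))) * Polynomial.X ^ (m + 1))) -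
    Polynomial.C s * (Polynomial.C (((1 : ℕ) : KK)⁻¹) *
      ((1 - Polynomial.C (qq ^ (1 : ℕ))) * (Polynomial.X - 1) *
        (1 - Polynomial.C (qq ^ (-((1 : ℕ) : ℤ))) * Polynomial.X))) * Polynomial.X ^ m with hP
  have hT : (T (((m + 1 : ℕ)) : ℤ) : LaurentPolynomial KK) = T 1 * T (m : ℤ) := by
    rw [← T_add]
    congr 1
    push_cast
    ring
  have hstep : C s * alphaE 1 * T (((m + 1 : ℕ)) : ℤ)
      = C s * (alphaE 1 * T ((1 : ℕ) : ℤ)) * T (m : ℤ) := by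
    rw [hT]
    push_cast
    ring
  have hmain : (alphaE (m + 1) - C s * alphaE 1) * T (((m + 1 : ℕ)) : ℤ)
      = Polynomial.toLaurent P := by
    rw [sub_mul, hstep, key (m + 1), key 1, hP]
    simp only [map_sub, map_mul, Polynomial.toLaurent_C, Polynomial.toLaurent_X,
      Polynomial.toLaurent_X_pow, map_one, map_pow]
    have eT : ∀ k : ℕ, (T ((k : ℕ) : ℤ) : LaurentPolynomial KK) = T 1 ^ k := fun k => by
      rw [T_pow, mul_one]
    simp only [eT]
    push_cast
    ring
  rw [hmain]
  have hdvd : (Polynomial.X - Polynomial.C qq)^2 ∣ P := by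
    apply sq_dvd_aux
    · simp only [hP, Polynomial.eval_sub, Polynomial.eval_mul, Polynomial.eval_pow,
        Polynomial.eval_C, Polynomial.eval_X, Polynomial.eval_one]
      have e1 : (1 : KK) - qq ^ (-((m + 1 : ℕ) : ℤ)) * qq ^ (m + 1) = 0 := by
        rw [zpow_neg, zpow_natCast, inv_mul_cancel₀ (pow_ne_zero _ qq_ne_zero)]
        ring
      have e2 : (1 : KK) - qq ^ (-((1 : ℕ) : ℤ)) * qq = 0 := by
        rw [show (-((1 : ℕ) : ℤ)) = -1 by norm_num, zpow_neg, zpow_one,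
          inv_mul_cancel₀ qq_ne_zero, sub_self]
      rw [e1, e2]
      ring
    · have hq := qq_ne_zero
      have hqn : qq ^ (m + 1) ≠ 0 := pow_ne_zero _ hq
      have hd := denom_ne_zero
      have hzn : qq ^ (-((m + 1 : ℕ) : ℤ)) = (qq ^ (m + 1))⁻¹ := by
        rw [zpow_neg, zpow_natCast]
      have hz1 : qq ^ (-((1 : ℕ) : ℤ)) = qq⁻¹ := by
        rw [zpow_neg]; norm_num
      simp only [hP, Polynomial.derivative_sub, Polynomial.derivative_mul,
        Polynomial.derivative_C, Polynomial.derivative_one, Polynomial.derivative_X,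
        Polynomial.derivative_pow, Polynomial.eval_add, Polynomial.eval_sub,
        Polynomial.eval_mul, Polynomial.eval_pow, Polynomial.eval_C, Polynomial.eval_X,
        Polynomial.eval_one, Polynomial.eval_natCast, Polynomial.eval_zero]
      rw [hs]
      unfold qint_sq
      have hq1 : qq - 1 ≠ 0 := sub_ne_zero.mpr qq_ne_one
      have hden : qq - 2 + qq⁻¹ = (qq - 1)^2 / qq := by
        field_simp
        ring
      have hnK : ((m + 1 : ℕ) : KK) ≠ 0 := by
        rw [← map_natCast (algebraMap ℚ KK) (m + 1)]
        simp only [ne_eq, map_eq_zero]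
        exact_mod_cast Nat.succ_ne_zero m
      rw [hzn, hz1, hden]
      push_cast at hnK ⊢
      have hnK2 : (1 : KK) + (m : KK) ≠ 0 := by rw [add_comm]; exact hnK
      field_simp [hnK, hnK2]
      ring
  have hmap := map_dvd (Polynomial.toLaurent (R := KK)) hdvd
  simpa using hmap
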